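/- Let K be a field of characteristic zero, n ≥ 1, and let a, b, c be n×n matrices over K that pairwise commute and satisfy a+b+c = α·I, a²+b²+c² = β·I, a³+b³+c³ = γ·I for scalars α, β, γ. Then the polynomial r(x) = 6x³ - 6αx² + (3α² - 3β)x + 3αβ - 2γ - α³ annihilates each of a, b, c. -/
import Mathlib

lemma aux0 {K R : Type*} [CommRing K] [CommRing R] [Algebra K R]
    (α β γ : K) (a b c : R)
    (h1 : a + b + c = α • (1 : R))
    (h2 : a ^ 2 + b ^ 2 + c ^ 2 = β • (1 : R))
    (h3 : a ^ 3 + b ^ 3 + c ^ 3 = γ • (1 : R)) :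
    (6 : K) • a ^ 3 - (6 * α) • a ^ 2 + (3 * α ^ 2 - 3 * β) • a
      + (3 * α * β - 2 * γ - α ^ 3) • (1 : R) = 0 := by
  simp only [Algebra.smul_def, map_mul, map_sub, map_pow, map_ofNat, mul_one] at *
  set A := algebraMap K R α
  set B := algebraMap K R β
  set G := algebraMap K R γ
  linear_combination (6*a^2 - 3*(A + (a+b+c))*a + (a+b+c)^2 + (a+b+c)*A + A^2
      - 3*(a^2+b^2+c^2)) * h1 + (3*a - 3*A) * h2 + 2 * h3

theorem stmt0 {K : Type*} [Field K] [CharZero K] {n : ℕ} (hn : 1 ≤ n)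
    (α β γ : K) (a b c : Matrix (Fin n) (Fin n) K)
    (hab : a * b = b * a) (hac : a * c = c * a) (hbc : b * c = c * b)
    (h1 : a + b + c = α • (1 : Matrix (Fin n) (Fin n) K))
    (h2 : a ^ 2 + b ^ 2 + c ^ 2 = β • (1 : Matrix (Fin n) (Fin n) K))
    (h3 : a ^ 3 + b ^ 3 + c ^ 3 = γ • (1 : Matrix (Fin n) (Fin n) K)) :
    ∀ m ∈ ({a, b, c} : Set (Matrix (Fin n) (Fin n) K)),
      (6 : K) • m ^ 3 - (6 * α) • m ^ 2 + (3 * α ^ 2 - 3 * β) • m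
        + (3 * α * β - 2 * γ - α ^ 3) • (1 : Matrix (Fin n) (Fin n) K) = 0 := by
  have hcomm : ∀ x ∈ ({a, b, c} : Set (Matrix (Fin n) (Fin n) K)),
      ∀ y ∈ ({a, b, c} : Set (Matrix (Fin n) (Fin n) K)), x * y = y * x := by
    intro x hx y hy
    simp only [Set.mem_insert_iff, Set.mem_singleton_iff] at hx hy
    rcases hx with rfl | rfl | rfl <;> rcases hy with rfl | rfl | rfl <;>
      first
        | rfl
        | exact hab | exact hab.symm
        | exact hac | exact hac.symm
        | exact hbc | exact hbc.symm
  letI instCR : CommRing (Algebra.adjoin K ({a, b, c} : Set (Matrix (Fin n) (Fin n) K))) :=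
    Algebra.adjoinCommRingOfComm K hcomm
  letI instAlg : Algebra K (Algebra.adjoin K ({a, b, c} : Set (Matrix (Fin n) (Fin n) K))) :=
    Subalgebra.algebra _
  have ha : a ∈ Algebra.adjoin K ({a, b, c} : Set (Matrix (Fin n) (Fin n) K)) :=
    Algebra.subset_adjoin (by simp)
  have hb : b ∈ Algebra.adjoin K ({a, b, c} : Set (Matrix (Fin n) (Fin n) K)) :=
    Algebra.subset_adjoin (by simp)
  have hc : c ∈ Algebra.adjoin K ({a, b, c} : Set (Matrix (Fin n) (Fin n) K)) :=
    Algebra.subset_adjoin (by simp)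
  have key : ∀ x y z : Matrix (Fin n) (Fin n) K,
      ∀ hx : x ∈ Algebra.adjoin K ({a, b, c} : Set (Matrix (Fin n) (Fin n) K)),
      ∀ hy : y ∈ Algebra.adjoin K ({a, b, c} : Set (Matrix (Fin n) (Fin n) K)),
      ∀ hz : z ∈ Algebra.adjoin K ({a, b, c} : Set (Matrix (Fin n) (Fin n) K)),
      x + y + z = α • 1 → x ^ 2 + y ^ 2 + z ^ 2 = β • 1 → x ^ 3 + y ^ 3 + z ^ 3 = γ • 1 →
      (6 : K) • x ^ 3 - (6 * α) • x ^ 2 + (3 * α ^ 2 - 3 * β) • x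
        + (3 * α * β - 2 * γ - α ^ 3) • (1 : Matrix (Fin n) (Fin n) K) = 0 := by
    intro x y z hx hy hz e1 e2 e3
    exact congrArg Subtype.val
      (aux0 α β γ (⟨x, hx⟩ : Algebra.adjoin K _) ⟨y, hy⟩ ⟨z, hz⟩
        (Subtype.ext e1) (Subtype.ext e2) (Subtype.ext e3))
  rintro m hm
  simp only [Set.mem_insert_iff, Set.mem_singleton_iff] at hm
  rcases hm with rfl | rfl | rfl
  · exact key m b c ha hb hc h1 h2 h3
  · exact key m a c hb ha hc (by rw [← h1]; abel) (by rw [← h2]; abel) (by rw [← h3]; abel)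
  · exact key m a b hc ha hb (by rw [← h1]; abel) (by rw [← h2]; abel) (by rw [← h3]; abel)
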